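/- Let K be a field of characteristic 0, π ∈ K^×, and α_2,…,α_m, β_1,…,β_n ∈ K. Let φ_π be the K-algebra automorphism of the Weyl algebra A_1(K) determined by φ_π(x) = -∂/π and φ_π(∂) = πx (the Fourier substitution). Then φ_π(Hyp_{(-1)^p π}(-β_1-1,…,-β_n-1; -α_2-1,…,-α_m-1)) = u · x^{-1} · (x∂·∏_{i=2}^m(x∂-α_i) - (-1)^{m+np}π^{m-n} x ∏_{j=1}^n(x∂-β_j)) = u·x^{-1}·Hyp_π(0,α_2,…,α_m; β_1,…,β_n), where u = (-1)^{n(p-1)+m-1}π^{n-m} is a nonzero scalar (equality holding in the localized algebra K⟨x,x^{-1},∂⟩). -/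
import Mathlib

/-- The hypergeometric operator `∏ᵢ(x∂-αᵢ) - c·x·∏ⱼ(x∂-βⱼ)`. -/
noncomputable def hypOp {K A : Type*} [Field K] [Ring A] [Algebra K A]
    (x d : A) {m n : ℕ} (α : Fin m → K) (β : Fin n → K) (c : K) : A :=
  (List.ofFn fun i : Fin m => x * d - algebraMap K A (α i)).prod
    - algebraMap K A c * x * (List.ofFn fun j : Fin n => x * d - algebraMap K A (β j)).prod

private lemma ofFn_neg_prod {A : Type*} [Ring A] :
    ∀ {n : ℕ} (f : Fin n → A),
      (List.ofFn fun i => -(f i)).prod = (-1 : A) ^ n * (List.ofFn f).prod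
  | 0, f => by simp
  | n + 1, f => by
    rw [List.ofFn_succ, List.ofFn_succ, List.prod_cons, List.prod_cons,
      ofFn_neg_prod (fun i => f i.succ), pow_succ]
    have hc : ((-1 : A) ^ n) * f 0 = f 0 * (-1 : A) ^ n :=
      ((Commute.neg_one_left (f 0)).pow_left n).eq
    rw [neg_mul, ← mul_assoc, ← hc, mul_assoc, ← mul_neg, mul_assoc ((-1 : A) ^ n),
      neg_one_mul]

private lemma neg_one_pow_eq_of_two_dvd {K : Type*} [Field K] (a b k : ℕ)
    (h : a = b + 2 * k) : (-1 : K) ^ a = (-1 : K) ^ b := by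
  subst h
  rw [pow_add, pow_mul, neg_one_sq, one_pow, mul_one]

private lemma neg_one_zpow_sub {K : Type*} [Field K] (a b : ℕ) :
    (-1 : K) ^ ((a : ℤ) - (b : ℤ)) = (-1 : K) ^ a * (-1 : K) ^ b := by
  rw [zpow_sub₀ (by norm_num : (-1 : K) ≠ 0), zpow_natCast, zpow_natCast, div_eq_mul_inv,
    ← inv_pow, inv_neg, inv_one]

private lemma aM_pull {K B : Type*} [Field K] [Ring B] [Algebra K B] (a b e : K) (v P : B) :
    algebraMap K B a * (algebraMap K B b * v) * (algebraMap K B e * P)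
      = algebraMap K B (a * b * e) * (v * P) := by
  simp only [← Algebra.smul_def, smul_smul, smul_mul_smul_comm]

private lemma aM_mul_pull {K B : Type*} [Field K] [Ring B] [Algebra K B] (a b : K) (P : B) :
    algebraMap K B a * (algebraMap K B b * P) = algebraMap K B (a * b) * P := by
  rw [map_mul, mul_assoc]

/-- The key Fourier-transform computation of Theorem 3.8: substituting
`x ↦ -∂/π`, `∂ ↦ πx` into `Hyp_{(-1)^p π}(-β₁-1,…,-βₙ-1; -α₂-1,…,-α_{m+1}-1)` yields
`(-1)^{n(p-1)+m} π^{n-m-1} · x⁻¹ · Hyp_π(0,α₂,…,α_{m+1}; β₁,…,βₙ)`, computed in the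
localized algebra `K⟨x,x⁻¹,∂⟩`. Here `α : Fin (m+1) → K` with `α 0 = 0`. -/
theorem fourier_hypOp {K : Type*} [Field K] [CharZero K] (p : ℕ) (hp : p.Prime)
    (B : Type*) [Ring B] [Algebra K B] (x xinv d : B)
    (hrel : d * x = x * d + 1) (hx1 : x * xinv = 1) (hx2 : xinv * x = 1)
    (π : K) (hπ : π ≠ 0) {m n : ℕ} (α : Fin (m + 1) → K) (hα0 : α 0 = 0)
    (β : Fin n → K) :
    hypOp (-(π⁻¹) • d) (π • x)
        (fun j : Fin n => -β j - 1) (fun i : Fin m => -α i.succ - 1)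
        ((-1 : K) ^ (n + m * p) * ((-1 : K) ^ p * π) ^ ((n : ℤ) - (m : ℤ)))
      = algebraMap K B ((-1 : K) ^ (n * (p - 1) + m) * π ^ ((n : ℤ) - ((m : ℤ) + 1)))
          * (xinv * hypOp x d α β
              ((-1 : K) ^ ((m + 1) + n * p) * π ^ (((m : ℤ) + 1) - (n : ℤ)))) := by
  have hp1 := hp.pos
  obtain ⟨q, rfl⟩ : ∃ q, p = q + 1 := ⟨p - 1, by omega⟩
  let aM := algebraMap K B
  -- abbreviations for the scalars
  set c : K := (-1 : K) ^ (n + m * (q + 1)) * ((-1 : K) ^ (q + 1) * π) ^ ((n : ℤ) - (m : ℤ))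
    with hc
  set u : K := (-1 : K) ^ (n * (q + 1 - 1) + m) * π ^ ((n : ℤ) - ((m : ℤ) + 1)) with hu
  set c' : K := (-1 : K) ^ ((m + 1) + n * (q + 1)) * π ^ (((m : ℤ) + 1) - (n : ℤ)) with hc'
  set Pβ : B := (List.ofFn fun j : Fin n => x * d - aM (β j)).prod with hPβ
  set Pα : B := (List.ofFn fun i : Fin m => x * d - aM (α i.succ)).prod with hPα
  -- the basic Fourier relation
  have hXD : (-(π⁻¹) • d) * (π • x) = -(x * d + 1) := by
    rw [smul_mul_smul_comm, hrel]
    have h1 : -π⁻¹ * π = -1 := by field_simp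
    rw [h1, neg_smul, one_smul]
  have hfac : ∀ γ : K, (-(π⁻¹) • d) * (π • x) - aM (-γ - 1) = -(x * d - aM γ) := by
    intro γ
    rw [hXD, map_sub, map_neg, map_one]
    abel
  -- rewrite the two transformed products
  have hβprod : (List.ofFn fun j : Fin n =>
      (-(π⁻¹) • d) * (π • x) - aM (-β j - 1)).prod = (-1 : B) ^ n * Pβ := by
    rw [show (fun j : Fin n => (-(π⁻¹) • d) * (π • x) - aM (-β j - 1))
        = fun j : Fin n => -(x * d - aM (β j)) from funext fun j => hfac (β j)]
    exact ofFn_neg_prod _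
  have hαprod : (List.ofFn fun i : Fin m =>
      (-(π⁻¹) • d) * (π • x) - aM (-α i.succ - 1)).prod = (-1 : B) ^ m * Pα := by
    rw [show (fun i : Fin m => (-(π⁻¹) • d) * (π • x) - aM (-α i.succ - 1))
        = fun i : Fin m => -(x * d - aM (α i.succ)) from funext fun i => hfac (α i.succ)]
    exact ofFn_neg_prod _
  have hneg_pow : ∀ k : ℕ, (-1 : B) ^ k = aM ((-1 : K) ^ k) := by
    intro k; rw [map_pow, map_neg, map_one]
  -- LHS in normal form
  have hLHS : hypOp (-(π⁻¹) • d) (π • x)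
      (fun j : Fin n => -β j - 1) (fun i : Fin m => -α i.succ - 1) c
      = aM ((-1 : K) ^ n) * Pβ + aM (c * π⁻¹ * (-1 : K) ^ m) * (d * Pα) := by
    rw [hypOp, hβprod, hαprod, hneg_pow n, hneg_pow m, Algebra.smul_def (-π⁻¹) d,
      aM_pull c (-π⁻¹) ((-1 : K) ^ m) d Pα,
      show c * -π⁻¹ * (-1 : K) ^ m = -(c * π⁻¹ * (-1 : K) ^ m) from by ring,
      map_neg, neg_mul, sub_neg_eq_add]
  -- RHS in normal form
  have hαfull : (List.ofFn fun i : Fin (m + 1) => x * d - aM (α i)).prod = x * d * Pα := by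
    rw [List.ofFn_succ, List.prod_cons, hα0, map_zero, sub_zero, hPα]
  have hRHS : aM u * (xinv * hypOp x d α β c')
      = aM (-(u * c')) * Pβ + aM u * (d * Pα) := by
    rw [hypOp, hαfull]
    have h1 : xinv * (x * d * Pα - aM c' * x * Pβ)
        = d * Pα - aM c' * Pβ := by
      rw [mul_sub]
      congr 1
      · rw [show x * d * Pα = x * (d * Pα) from by rw [mul_assoc], ← mul_assoc, hx2, one_mul]
      · calc xinv * (aM c' * x * Pβ) = xinv * (x * aM c' * Pβ) := by
              rw [Algebra.commutes]
          _ = aM c' * Pβ := by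
              rw [mul_assoc x, ← mul_assoc xinv, hx2, one_mul]
    rw [h1, mul_sub, aM_mul_pull u c' Pβ, map_neg, neg_mul]
    abel
  rw [hLHS, hRHS]
  -- scalar identities
  have hπz1 : π ^ ((n : ℤ) - ((m : ℤ) + 1)) * π ^ (((m : ℤ) + 1) - (n : ℤ)) = 1 := by
    rw [← zpow_add₀ hπ,
      show (n : ℤ) - ((m : ℤ) + 1) + (((m : ℤ) + 1) - (n : ℤ)) = 0 from by ring, zpow_zero]
  have hs1 : ((-1 : K) ^ n) = -(u * c') := by
    rw [hu, hc',
      show (-1 : K) ^ (n * (q + 1 - 1) + m) * π ^ ((n : ℤ) - ((m : ℤ) + 1))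
          * ((-1 : K) ^ ((m + 1) + n * (q + 1)) * π ^ (((m : ℤ) + 1) - (n : ℤ)))
        = (-1 : K) ^ (n * (q + 1 - 1) + m) * (-1 : K) ^ ((m + 1) + n * (q + 1))
          * (π ^ ((n : ℤ) - ((m : ℤ) + 1)) * π ^ (((m : ℤ) + 1) - (n : ℤ))) from by ring,
      hπz1, mul_one, ← pow_add,
      show -((-1 : K) ^ (n * (q + 1 - 1) + m + ((m + 1) + n * (q + 1))))
        = (-1 : K) ^ ((n * (q + 1 - 1) + m + ((m + 1) + n * (q + 1))) + 1) from by
          rw [pow_succ, mul_neg_one]]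
    exact (neg_one_pow_eq_of_two_dvd _ n (n * q + m + 1) (by
      simp only [Nat.add_sub_cancel]; ring)).symm
  have hπz2 : π ^ ((n : ℤ) - (m : ℤ)) * π⁻¹ = π ^ ((n : ℤ) - ((m : ℤ) + 1)) := by
    rw [← zpow_neg_one, ← zpow_add₀ hπ,
      show (n : ℤ) - (m : ℤ) + (-1) = (n : ℤ) - ((m : ℤ) + 1) from by ring]
  have hs2 : c * π⁻¹ * (-1 : K) ^ m = u := by
    rw [hc, hu, mul_zpow,
      show ((-1 : K) ^ (q + 1)) ^ ((n : ℤ) - (m : ℤ))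
          = ((-1 : K)) ^ ((((q + 1) * n : ℕ) : ℤ) - (((q + 1) * m : ℕ) : ℤ)) from by
        rw [← zpow_natCast (-1 : K) (q + 1), ← zpow_mul]
        congr 1
        push_cast
        ring,
      neg_one_zpow_sub]
    have hsgn : (-1 : K) ^ (n + m * (q + 1)) * (-1 : K) ^ ((q + 1) * n)
        * (-1 : K) ^ ((q + 1) * m) * (-1 : K) ^ m = (-1 : K) ^ (n * (q + 1 - 1) + m) := by
      rw [← pow_add, ← pow_add, ← pow_add]
      exact neg_one_pow_eq_of_two_dvd _ _ (n + m * (q + 1)) (by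
        simp only [Nat.add_sub_cancel]; ring)
    calc (-1 : K) ^ (n + m * (q + 1)) * ((-1 : K) ^ ((q + 1) * n) * (-1 : K) ^ ((q + 1) * m)
          * π ^ ((n : ℤ) - (m : ℤ))) * π⁻¹ * (-1 : K) ^ m
        = ((-1 : K) ^ (n + m * (q + 1)) * (-1 : K) ^ ((q + 1) * n) * (-1 : K) ^ ((q + 1) * m)
            * (-1 : K) ^ m) * (π ^ ((n : ℤ) - (m : ℤ)) * π⁻¹) := by ring
      _ = (-1 : K) ^ (n * (q + 1 - 1) + m) * π ^ ((n : ℤ) - ((m : ℤ) + 1)) := by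
          rw [hsgn, hπz2]
  rw [hs1, hs2]
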